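/- With g_L and g_R the unit tangent direction vectors from p_i to the circle of radius r around p_j (d = ‖p_j - p_i‖ > r), the inner product satisfies g_L · g_R = cos θ = 1 - 2(r/d)². -/

import Mathlib

open scoped RealInnerProductSpace

/-- With `g_L` and `g_R` the unit tangent direction vectors from `p_i` to the circle of
radius `r` around `p_j` (with `d = ‖p_j - p_i‖ > r`), the inner product satisfies
`⟪g_L, g_R⟫ = cos θ = 1 - 2 (r/d)²`. -/
theorem stmt_9 (pi pj g gperp pjL pjR gL gR : EuclideanSpace ℝ (Fin 2))
    (r d h k : ℝ) (hr : 0 < r) (hd : d = ‖pj - pi‖) (hdr : r < d)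
    (hg : g = (d⁻¹ : ℝ) • (pj - pi))
    (hperp : ⟪g, gperp⟫ = 0) (hperpnorm : ‖gperp‖ = 1)
    (hh : h = r * Real.sqrt (d ^ 2 - r ^ 2) / d) (hk : k = r ^ 2 / d)
    (hL : pjL = pj - k • g + h • gperp) (hR : pjR = pj - k • g - h • gperp)
    (hgL : gL = (‖pjL - pi‖⁻¹ : ℝ) • (pjL - pi))
    (hgR : gR = (‖pjR - pi‖⁻¹ : ℝ) • (pjR - pi)) :
    ⟪gL, gR⟫ = 1 - 2 * (r / d) ^ 2 := by
  have hd0 : 0 < d := lt_trans hr hdr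
  have hu : pj - pi = d • g := by
    rw [hg, smul_smul, mul_inv_cancel₀ hd0.ne', one_smul]
  have hgg : ⟪g, g⟫ = 1 := by
    rw [hg, real_inner_smul_left, real_inner_smul_right, real_inner_self_eq_norm_sq, ← hd]
    field_simp
  have hperp' : ⟪gperp, g⟫ = 0 := by rw [real_inner_comm]; exact hperp
  have hpp : ⟪gperp, gperp⟫ = 1 := by
    rw [real_inner_self_eq_norm_sq, hperpnorm]; norm_num
  have hL' : pjL - pi = (d - k) • g + h • gperp := by
    have : pj = pi + d • g := by rw [← hu]; abel
    rw [hL, this]; module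
  have hR' : pjR - pi = (d - k) • g - h • gperp := by
    have : pj = pi + d • g := by rw [← hu]; abel
    rw [hR, this]; module
  have hs2 : Real.sqrt (d ^ 2 - r ^ 2) ^ 2 = d ^ 2 - r ^ 2 :=
    Real.sq_sqrt (by nlinarith)
  have hh2 : h ^ 2 = r ^ 2 * (d ^ 2 - r ^ 2) / d ^ 2 := by
    rw [hh, div_pow, mul_pow, hs2]
  have hdk : d - k = (d ^ 2 - r ^ 2) / d := by rw [hk]; field_simp
  have innLL : ⟪pjL - pi, pjL - pi⟫ = (d - k) ^ 2 + h ^ 2 := by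
    rw [hL']
    simp only [inner_add_left, inner_add_right, real_inner_smul_left, real_inner_smul_right,
      hgg, hperp, hperp', hpp]
    ring
  have innRR : ⟪pjR - pi, pjR - pi⟫ = (d - k) ^ 2 + h ^ 2 := by
    rw [hR']
    simp only [inner_sub_left, inner_sub_right, real_inner_smul_left, real_inner_smul_right,
      hgg, hperp, hperp', hpp]
    ring
  have innLR : ⟪pjL - pi, pjR - pi⟫ = (d - k) ^ 2 - h ^ 2 := by
    rw [hL', hR']
    simp only [inner_add_left, inner_sub_left, inner_sub_right, real_inner_smul_left,
      real_inner_smul_right, hgg, hperp, hperp', hpp]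
    ring
  have hnorm2 : (d - k) ^ 2 + h ^ 2 = d ^ 2 - r ^ 2 := by
    rw [hdk, hh2]; field_simp; ring
  have hs0 : 0 < d ^ 2 - r ^ 2 := by nlinarith
  have nLv : ‖pjL - pi‖ = Real.sqrt (d ^ 2 - r ^ 2) := by
    rw [← Real.sqrt_sq (norm_nonneg _), ← real_inner_self_eq_norm_sq, innLL, hnorm2]
  have nRv : ‖pjR - pi‖ = Real.sqrt (d ^ 2 - r ^ 2) := by
    rw [← Real.sqrt_sq (norm_nonneg _), ← real_inner_self_eq_norm_sq, innRR, hnorm2]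
  have hspos : 0 < Real.sqrt (d ^ 2 - r ^ 2) := Real.sqrt_pos.mpr hs0
  have hdiff : (d - k) ^ 2 - h ^ 2 = (d ^ 2 - r ^ 2) * (d ^ 2 - 2 * r ^ 2) / d ^ 2 := by
    rw [hdk, hh2]; field_simp; ring
  rw [hgL, hgR, real_inner_smul_left, real_inner_smul_right, innLR, nLv, nRv, hdiff, ← hs2]
  have hss : Real.sqrt (d ^ 2 - r ^ 2) * Real.sqrt (d ^ 2 - r ^ 2) = d ^ 2 - r ^ 2 :=
    Real.mul_self_sqrt hs0.le
  field_simp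
  have hT : Real.sqrt (Real.sqrt (d ^ 2 - r ^ 2) ^ 2) ^ 2 = Real.sqrt (d ^ 2 - r ^ 2) ^ 2 :=
    Real.sq_sqrt (sq_nonneg _)
  linear_combination -(d ^ 2 - 2 * r ^ 2) * hT
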